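/- Let R ⊆ ℤ³ be a connected configuration whose slice graph H is connected and has more than one vertex, and let s₀ be the slice of H containing a module of globally maximal z-coordinate. Then H contains a locally extremal slice s ≠ s₀ such that deleting the vertex s from H leaves the graph H connected. -/

import Mathlib

namespace SlidingCubes

/-- A cell of the `d`-dimensional integer lattice. -/
abbrev Cell (d : ℕ) : Type := Fin d → ℤ

/-- Face adjacency: the cells differ by exactly 1 in exactly one coordinate. -/
def adj {d : ℕ} (a b : Cell d) : Prop :=
  ∃ i, |a i - b i| = 1 ∧ ∀ j, j ≠ i → a j = b j

/-- Edge adjacency: the cells differ by exactly 1 in exactly two coordinates. -/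
def edgeAdj {d : ℕ} (a b : Cell d) : Prop :=
  ∃ i j, i ≠ j ∧ |a i - b i| = 1 ∧ |a j - b j| = 1 ∧ ∀ l, l ≠ i → l ≠ j → a l = b l

/-- The axis-aligned `k × ⋯ × k` box of cells whose lowest corner is `c`. -/
def box {d : ℕ} (k : ℕ) (c : Cell d) : Set (Cell d) :=
  {p | ∀ i, c i ≤ p i ∧ p i < c i + k}

/-- The box `box k c` contains no module of the configuration `C`. -/
def emptyBox {d : ℕ} (k : ℕ) (C : Set (Cell d)) (c : Cell d) : Prop :=
  ∀ p ∈ box k c, p ∉ C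

/-- One unit axis-aligned translation step between boxes, landing on a box empty of `C`. -/
def boxStep {d : ℕ} (k : ℕ) (C : Set (Cell d)) (c c' : Cell d) : Prop :=
  adj c c' ∧ emptyBox k C c'

/-- Connectivity of a set of cells under face adjacency. -/
def ConnectedConf {d : ℕ} (S : Set (Cell d)) : Prop :=
  ∀ a ∈ S, ∀ b ∈ S, Relation.ReflTransGen (fun p q => q ∈ S ∧ adj p q) a b

/-- The (empty) box at `c` is connected to infinity by a sequence of `k×⋯×k` boxes free
of modules of `C`, consecutive boxes differing by a unit axis-aligned translation:
it can reach a box lying beyond all of `C` in some coordinate direction. -/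
def boxEscapes {d : ℕ} (k : ℕ) (C : Set (Cell d)) (c : Cell d) : Prop :=
  ∃ c', Relation.ReflTransGen (boxStep k C) c c' ∧ ∃ i, ∀ p ∈ C, p i < c' i

/-- `p` belongs to the outer (infinite) face-adjacency-connected component of the
complement of `C`. -/
def outer {d : ℕ} (C : Set (Cell d)) (p : Cell d) : Prop :=
  p ∉ C ∧ ∃ q, Relation.ReflTransGen (fun u v => v ∉ C ∧ adj u v) p q ∧
    ∃ i, ∀ r ∈ C, r i < q i

/-- A `k`-loose straight slide in configuration `C`, moving the module at `a`
one unit step to the empty cell `b`: both positions lie in a common `k×⋯×k` box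
containing no other module. -/
def LooseStraight {d : ℕ} (k : ℕ) (C : Set (Cell d)) (a b : Cell d) : Prop :=
  a ∈ C ∧ b ∉ C ∧ adj a b ∧
  ∃ c, a ∈ box k c ∧ b ∈ box k c ∧ emptyBox k (C \ {a}) c

/-- A `k`-loose corner slide in configuration `C`, moving the module at `a` by two
consecutive perpendicular unit steps, through the empty cell `m`, to the empty cell `b`,
around a neighboring module `p` (restoring adjacency with it); each unit step is
contained in a `k×⋯×k` box containing no other module, and the first box can be
translated to the second through boxes containing no other module. -/
def LooseCorner {d : ℕ} (k : ℕ) (C : Set (Cell d)) (a m b : Cell d) : Prop :=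
  a ∈ C ∧ m ∉ C ∧ b ∉ C ∧ adj a m ∧ adj m b ∧ edgeAdj a b ∧
  (∃ p ∈ C, adj p a ∧ adj p b) ∧
  ∃ c₁ c₂, a ∈ box k c₁ ∧ m ∈ box k c₁ ∧ m ∈ box k c₂ ∧ b ∈ box k c₂ ∧
    emptyBox k (C \ {a}) c₁ ∧ emptyBox k (C \ {a}) c₂ ∧
    Relation.ReflTransGen (boxStep k (C \ {a})) c₁ c₂

/-- A `k`-loose sliding move from configuration `C` to `C'`, moving the module at `a`
to the cell `b`; the move keeps the configuration connected. -/
def LooseMoveVia {d : ℕ} (k : ℕ) (C : Set (Cell d)) (a b : Cell d)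
    (C' : Set (Cell d)) : Prop :=
  (LooseStraight k C a b ∨ ∃ m, LooseCorner k C a m b) ∧
  C' = insert b (C \ {a}) ∧ ConnectedConf C'

/-- A `k`-loose sliding move from configuration `C` to `C'`. -/
def LooseMove {d : ℕ} (k : ℕ) (C C' : Set (Cell d)) : Prop :=
  ∃ a b, LooseMoveVia k C a b C'

/-- A `k`-accessible sliding move: a `k`-loose move whose empty `k×⋯×k` box is connected
to infinity through boxes free of modules, both before and after the move. -/
def AccessibleMoveVia {d : ℕ} (k : ℕ) (C : Set (Cell d)) (a b : Cell d)
    (C' : Set (Cell d)) : Prop :=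
  LooseMoveVia k C a b C' ∧
  (∃ c, a ∈ box k c ∧ emptyBox k (C \ {a}) c ∧ boxEscapes k (C \ {a}) c) ∧
  (∃ c, b ∈ box k c ∧ emptyBox k (C' \ {b}) c ∧ boxEscapes k (C' \ {b}) c)

/-- A `k`-accessible sliding move from configuration `C` to `C'`. -/
def AccessibleMove {d : ℕ} (k : ℕ) (C C' : Set (Cell d)) : Prop :=
  ∃ a b, AccessibleMoveVia k C a b C'

/-- `L` is a straight line of `n` consecutive cells in the axis direction `i`. -/
def IsLineDir {d : ℕ} (i : Fin d) (n : ℕ) (L : Set (Cell d)) : Prop :=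
  ∃ c : Cell d, L = {p | ∃ t : ℕ, t < n ∧ p = Function.update c i (c i + t)}

/-- `L` is a straight line of `n` consecutive cells in some axis direction. -/
def IsLine {d : ℕ} (n : ℕ) (L : Set (Cell d)) : Prop := ∃ i, IsLineDir i n L

/-- The axis-aligned bounding box of the union of the boxes `box k c₁` and `box k c₂`. -/
def bboxPair {d : ℕ} (k : ℕ) (c₁ c₂ : Cell d) : Set (Cell d) :=
  {p | ∀ i, min (c₁ i) (c₂ i) ≤ p i ∧ p i < max (c₁ i) (c₂ i) + k}

/-- The configuration `T` has external feature size at least 2: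
(a) every empty cell is contained in an empty `2×⋯×2` box; and
(b) for every pair of edge-adjacent empty cells there are empty `2×⋯×2` boxes containing
them that can be slid into each other through empty boxes staying within the bounding
box of their union. -/
def EFS2 {d : ℕ} (T : Set (Cell d)) : Prop :=
  (∀ q, q ∉ T → ∃ c, q ∈ box 2 c ∧ emptyBox 2 T c) ∧
  (∀ q₁ q₂, q₁ ∉ T → q₂ ∉ T → edgeAdj q₁ q₂ →
    ∃ c₁ c₂, q₁ ∈ box 2 c₁ ∧ q₂ ∈ box 2 c₂ ∧ emptyBox 2 T c₁ ∧ emptyBox 2 T c₂ ∧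
      Relation.ReflTransGen
        (fun u v => adj u v ∧ emptyBox 2 T v ∧ box 2 v ⊆ bboxPair 2 c₁ c₂) c₁ c₂)

/-- The cell directly below `p` (in the `z` direction). -/
def below (p : Cell 3) : Cell 3 := Function.update p 2 (p 2 - 1)

/-- The face-adjacency-connected component of `x` within the modules of `R` lying in the
horizontal layer of `x`. -/
def layerComp (R : Set (Cell 3)) (x : Cell 3) : Set (Cell 3) :=
  {p | Relation.ReflTransGen (fun u v => v ∈ R ∧ v 2 = x 2 ∧ adj u v) x p}

/-- `s` is a slice of `R`: a connected component of the modules of `R` in some horizontal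
layer, having at least one module face-adjacent to a cell of the outer empty component. -/
def IsSlice (R : Set (Cell 3)) (s : Set (Cell 3)) : Prop :=
  (∃ x ∈ R, s = layerComp R x) ∧ ∃ m ∈ s, ∃ q, adj m q ∧ outer R q

/-- Adjacency of slices in the slice graph: the two (distinct) slices contain two
(vertically) face-adjacent modules. -/
def sliceAdj (R : Set (Cell 3)) (s₁ s₂ : Set (Cell 3)) : Prop :=
  IsSlice R s₁ ∧ IsSlice R s₂ ∧ s₁ ≠ s₂ ∧ ∃ p ∈ s₁, ∃ q ∈ s₂, adj p q

/-- A slice is locally maximal: every slice adjacent to it lies at a lower z-coordinate. -/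
def LocallyMax (R s : Set (Cell 3)) : Prop :=
  IsSlice R s ∧ ∀ s', sliceAdj R s s' → ∀ p ∈ s', ∀ q ∈ s, p 2 < q 2

/-- A slice is locally minimal: every slice adjacent to it lies at a higher z-coordinate. -/
def LocallyMin (R s : Set (Cell 3)) : Prop :=
  IsSlice R s ∧ ∀ s', sliceAdj R s s' → ∀ p ∈ s', ∀ q ∈ s, q 2 < p 2

/-- A slice is locally extremal if it is locally maximal or locally minimal. -/
def LocallyExtremal (R s : Set (Cell 3)) : Prop := LocallyMax R s ∨ LocallyMin R s

/-- `s` is a locally maximal slice in the strong sense: every module of `R` outside `s`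
that is face-adjacent to a module of `s` lies in the layer directly below `s`. -/
def LocallyMaxSlice (R s : Set (Cell 3)) : Prop :=
  IsSlice R s ∧ ∀ m ∈ R, m ∉ s → (∃ q ∈ s, adj m q) → ∀ q ∈ s, m 2 = q 2 - 1

/-- A module of the slice `s` is reddish if the cell directly below it is occupied. -/
def reddish (R s : Set (Cell 3)) (m : Cell 3) : Prop := m ∈ s ∧ below m ∈ R

/-- A module of the slice `s` is bluish if the cell directly below it is empty. -/
def bluish (R s : Set (Cell 3)) (m : Cell 3) : Prop := m ∈ s ∧ below m ∉ R

/-- A reddish module is orange if the layer component containing the module below it is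
not adjacent to the outer empty component (it is enclosed in a void). -/
def orange (R s : Set (Cell 3)) (m : Cell 3) : Prop :=
  reddish R s m ∧ ∀ p ∈ layerComp R (below m), ∀ q, adj p q → ¬ outer R q

/-- A reddish module is red if it is not orange. -/
def red (R s : Set (Cell 3)) (m : Cell 3) : Prop := reddish R s m ∧ ¬ orange R s m

/-- A bluish module is green if the cell below it belongs to the outer empty component. -/
def green (R s : Set (Cell 3)) (m : Cell 3) : Prop := bluish R s m ∧ outer R (below m)

/-- A bluish module is blue if the cell below it is empty but not in the outer empty
component. -/
def blue (R s : Set (Cell 3)) (m : Cell 3) : Prop := bluish R s m ∧ ¬ outer R (below m)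

/-- One unit step to the left (negative x). -/
def leftOf (p : Cell 3) : Cell 3 := Function.update p 0 (p 0 - 1)
/-- One unit step to the right (positive x). -/
def rightOf (p : Cell 3) : Cell 3 := Function.update p 0 (p 0 + 1)
/-- One unit step upward (positive y). -/
def upOf (p : Cell 3) : Cell 3 := Function.update p 1 (p 1 + 1)
/-- One unit step downward (negative y). -/
def downOf (p : Cell 3) : Cell 3 := Function.update p 1 (p 1 - 1)

/-- The directed graph `G_s` on the modules of a locally maximal slice `s` of `R`:
leftward edges, upward edges, and edges from the first bluish module of a
bluish-bluish-reddish triple (read left-to-right in a row, or top-to-bottom in a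
column) to the reddish module. -/
def gsEdge (R s : Set (Cell 3)) (a b : Cell 3) : Prop :=
  a ∈ s ∧ b ∈ s ∧
  (b = leftOf a ∨ b = upOf a ∨
   (bluish R s a ∧ bluish R s (rightOf a) ∧ reddish R s b ∧ b = rightOf (rightOf a)) ∨
   (bluish R s a ∧ bluish R s (downOf a) ∧ reddish R s b ∧ b = downOf (downOf a)))

/-- A module of `s` is reachable in `G_s` from some orange module. -/
def reachOrange (R s : Set (Cell 3)) (m : Cell 3) : Prop :=
  ∃ o, orange R s o ∧ Relation.ReflTransGen (gsEdge R s) o m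

/-- The set of modules of `s` not reachable in `G_s` from any orange module
(the modules removed by the algorithm). -/
def removedSet (R s : Set (Cell 3)) : Set (Cell 3) :=
  {m | m ∈ s ∧ ¬ reachOrange R s m}

/-- The cell at height `j + 1` directly above `m0`. -/
def aboveCell (m0 : Cell 3) (j : ℕ) : Cell 3 :=
  Function.update m0 2 (m0 2 + (j : ℤ) + 1)

/-- In the configuration `C`, the module at `x` can travel to the cell `y` via a
sequence of 2-accessible sliding moves moving only this module. -/
def travel (C : Set (Cell 3)) (x y : Cell 3) : Prop :=
  Relation.ReflTransGen
    (fun p q => AccessibleMoveVia 2 ((C \ {x}) ∪ {p}) p q ((C \ {x}) ∪ {q})) x y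


section Aux

private lemma adjSymm {d : ℕ} {a b : Cell d} (h : adj a b) : adj b a := by
  obtain ⟨i, h1, h2⟩ := h
  exact ⟨i, by rwa [abs_sub_comm], fun j hj => (h2 j hj).symm⟩

private lemma rtg_flip {α : Type*} {r : α → α → Prop} (hsym : ∀ a b, r a b → r b a)
    {a b : α} (h : Relation.ReflTransGen r a b) : Relation.ReflTransGen r b a := by
  induction h with
  | refl => exact Relation.ReflTransGen.refl
  | tail _ hstep ih => exact Relation.ReflTransGen.head (hsym _ _ hstep) ih

private lemma rtg_all {α : Type*} {r : α → α → Prop} {Q : α → Prop}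
    (hQ : ∀ u v, Q u → r u v → Q v) {a b : α} (ha : Q a)
    (h : Relation.ReflTransGen r a b) : Q b := by
  induction h with
  | refl => exact ha
  | tail _ hstep ih => exact hQ _ _ ih hstep

private lemma rtg_lift {α : Type*} {r : α → α → Prop} {Q : α → Prop}
    (hQ : ∀ u v, Q u → r u v → Q v) {a b : α} (ha : Q a)
    (h : Relation.ReflTransGen r a b) :
    Relation.ReflTransGen (fun u v => r u v ∧ Q u ∧ Q v) a b := by
  induction h with
  | tail hc hstep ih =>
      exact ih.tail ⟨hstep, rtg_all hQ ha hc, hQ _ _ (rtg_all hQ ha hc) hstep⟩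
  | refl => exact Relation.ReflTransGen.refl

private lemma rtg_firsthit {α : Type*} {r : α → α → Prop} (v0 : α) {a b : α}
    (h : Relation.ReflTransGen r a b) :
    a ≠ v0 →
    ((Relation.ReflTransGen (fun u v => r u v ∧ u ≠ v0 ∧ v ≠ v0) a b ∧ b ≠ v0) ∨
     ∃ x, Relation.ReflTransGen (fun u v => r u v ∧ u ≠ v0 ∧ v ≠ v0) a x ∧ r x v0) := by
  induction h using Relation.ReflTransGen.head_induction_on with
  | refl => intro hb; exact Or.inl ⟨Relation.ReflTransGen.refl, hb⟩
  | @head a' c hstep htail ih =>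
      intro ha'
      by_cases hc : c = v0
      · exact Or.inr ⟨a', Relation.ReflTransGen.refl, hc ▸ hstep⟩
      · rcases ih hc with ⟨hch, hb⟩ | ⟨x, hch, hx⟩
        · exact Or.inl ⟨Relation.ReflTransGen.head ⟨hstep, ha', hc⟩ hch, hb⟩
        · exact Or.inr ⟨x, Relation.ReflTransGen.head ⟨hstep, ha', hc⟩ hch, hx⟩

private lemma key {α : Type*} (z : α → ℤ) :
    ∀ (n : ℕ) (S : Finset α) (A : α → α → Prop),
      S.card ≤ n →
      (∀ a b, A a b → a ∈ S ∧ b ∈ S) →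
      (∀ a b, A a b → A b a) →
      (∀ a b, A a b → z a ≠ z b) →
      (∀ a ∈ S, ∀ b ∈ S, Relation.ReflTransGen A a b) →
      ∀ t, t ∈ S → 1 < S.card →
        ∃ s, s ∈ S ∧ s ≠ t ∧
          ((∀ b, A s b → z b < z s) ∨ (∀ b, A s b → z s < z b)) ∧
          (∀ a ∈ S, ∀ b ∈ S, a ≠ s → b ≠ s →
            Relation.ReflTransGen (fun u v => A u v ∧ u ≠ s ∧ v ≠ s) a b) := by
  intro n
  induction n with
  | zero =>
      intro S A hcard _ _ _ _ t ht hlt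
      omega
  | succ n ih =>
      intro S A hcard hAS hsym hz hconn t ht hlt
      classical
      obtain ⟨m, hmS, hmin⟩ := S.exists_min_image z ⟨t, ht⟩
      obtain ⟨M, hMS, hmax⟩ := S.exists_max_image z ⟨t, ht⟩
      have hzmM : z m < z M := by
        obtain ⟨a, haS, b, hbS, hab⟩ := Finset.one_lt_card.mp hlt
        rcases (hconn a haS b hbS).cases_head with h | ⟨c, hac, -⟩
        · exact absurd h hab
        · have hcS := (hAS a c hac).2
          have hne := hz a c hac
          have h1 := hmin a haS
          have h2 := hmax a haS
          have h3 := hmin c hcS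
          have h4 := hmax c hcS
          omega
      obtain ⟨e, heS, het, hext⟩ :
          ∃ e, e ∈ S ∧ e ≠ t ∧
            ((∀ b, A e b → z b < z e) ∨ (∀ b, A e b → z e < z b)) := by
        have hMext : ∀ b, A M b → z b < z M :=
          fun b hb => lt_of_le_of_ne (hmax b (hAS M b hb).2) (Ne.symm (hz M b hb))
        have hmext : ∀ b, A m b → z m < z b :=
          fun b hb => lt_of_le_of_ne (hmin b (hAS m b hb).2) (hz m b hb)
        by_cases hmt : m = t
        · refine ⟨M, hMS, ?_, Or.inl hMext⟩
          intro h
          rw [h, ← hmt] at hzmM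
          exact lt_irrefl _ hzmM
        · exact ⟨m, hmS, hmt, Or.inr hmext⟩
      by_cases hcut : ∀ a ∈ S, ∀ b ∈ S, a ≠ e → b ≠ e →
          Relation.ReflTransGen (fun u v => A u v ∧ u ≠ e ∧ v ≠ e) a b
      · exact ⟨e, heS, het, hext, hcut⟩
      push_neg at hcut
      obtain ⟨a₀, ha₀S, b₀, hb₀S, ha₀e, hb₀e, hnc0⟩ := hcut
      set A' : α → α → Prop := fun u v => A u v ∧ u ≠ e ∧ v ≠ e with hA'def
      have hA'sym : ∀ u v, A' u v → A' v u := fun u v h => ⟨hsym _ _ h.1, h.2.2, h.2.1⟩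
      obtain ⟨w, hwS, hwe, hwt⟩ : ∃ w, w ∈ S ∧ w ≠ e ∧ ¬ Relation.ReflTransGen A' w t := by
        by_cases h1 : Relation.ReflTransGen A' a₀ t
        · exact ⟨b₀, hb₀S, hb₀e, fun h2 => hnc0 (h1.trans (rtg_flip hA'sym h2))⟩
        · exact ⟨a₀, ha₀S, ha₀e, h1⟩
      set S' : Finset α := S.filter (fun x => x = e ∨ Relation.ReflTransGen A' w x) with hS'def
      have hmemS' : ∀ x, x ∈ S' ↔ x ∈ S ∧ (x = e ∨ Relation.ReflTransGen A' w x) :=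
        fun x => Finset.mem_filter
      have hS'sub : S' ⊆ S := Finset.filter_subset _ _
      have htS' : t ∉ S' := by
        intro h
        rcases (hmemS' t).mp h with ⟨-, h | h⟩
        · exact het h.symm
        · exact hwt h
      have heS' : e ∈ S' := (hmemS' e).mpr ⟨heS, Or.inl rfl⟩
      have hwS' : w ∈ S' := (hmemS' w).mpr ⟨hwS, Or.inr Relation.ReflTransGen.refl⟩
      set A'' : α → α → Prop := fun u v => A u v ∧ u ∈ S' ∧ v ∈ S' with hA''def
      have hcl : ∀ u v, u ∈ S' → A' u v → v ∈ S' := by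
        intro u v hu huv
        rcases (hmemS' u).mp hu with ⟨huS, hu' | hu'⟩
        · exact absurd hu' huv.2.1
        · exact (hmemS' v).mpr ⟨(hAS u v huv.1).2, Or.inr (hu'.tail huv)⟩
      have hreach : ∀ a, a ∈ S' → a ≠ e → Relation.ReflTransGen A'' w a := by
        intro a haS' hae
        have hwa : Relation.ReflTransGen A' w a := ((hmemS' a).mp haS').2.resolve_left hae
        exact Relation.ReflTransGen.mono (p := A'') (by intro u v h; exact ⟨h.1.1, h.2⟩) w a (rtg_lift hcl hwS' hwa)
      obtain ⟨x, hwx, hxe⟩ : ∃ x, Relation.ReflTransGen A' w x ∧ A x e := by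
        rcases rtg_firsthit e (hconn w hwS t ht) hwe with ⟨h1, -⟩ | h2
        · exact absurd h1 hwt
        · exact h2
      have hxS' : x ∈ S' := (hmemS' x).mpr ⟨(hAS x e hxe).1, Or.inr hwx⟩
      have hxne : x ≠ e := fun h => hz x e hxe (by rw [h])
      have hwe'' : Relation.ReflTransGen A'' w e :=
        (hreach x hxS' hxne).tail ⟨hxe, hxS', heS'⟩
      have hA''sym : ∀ u v, A'' u v → A'' v u := fun u v h => ⟨hsym _ _ h.1, h.2.2, h.2.1⟩
      have hconn' : ∀ a ∈ S', ∀ b ∈ S', Relation.ReflTransGen A'' a b := by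
        intro a haS' b hbS'
        have hwa : Relation.ReflTransGen A'' w a := by
          by_cases hae : a = e
          · exact hae ▸ hwe''
          · exact hreach a haS' hae
        have hwb : Relation.ReflTransGen A'' w b := by
          by_cases hbe : b = e
          · exact hbe ▸ hwe''
          · exact hreach b hbS' hbe
        exact (rtg_flip hA''sym hwa).trans hwb
      have hcard' : S'.card ≤ n := by
        have : S'.card < S.card :=
          Finset.card_lt_card ((Finset.ssubset_iff_of_subset hS'sub).mpr ⟨t, ht, htS'⟩)
        omega
      obtain ⟨s, hsS', hse, hsext, hsnc⟩ :=
        ih S' A'' hcard' (fun a b h => h.2) hA''sym (fun a b h => hz a b h.1) hconn'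
          e heS' (Finset.one_lt_card.mpr ⟨w, hwS', e, heS', hwe⟩)
      have hsS : s ∈ S := hS'sub hsS'
      have hsD : Relation.ReflTransGen A' w s := ((hmemS' s).mp hsS').2.resolve_left hse
      have hst : s ≠ t := fun h => htS' (h ▸ hsS')
      have hnbr : ∀ b, A s b → A'' s b := by
        intro b hb
        refine ⟨hb, hsS', ?_⟩
        by_cases hbe : b = e
        · exact hbe ▸ heS'
        · exact (hmemS' b).mpr ⟨(hAS s b hb).2, Or.inr (hsD.tail ⟨hb, hse, hbe⟩)⟩
      have hnotD : ∀ a, a ∈ S → a ∉ S' → ∀ y, Relation.ReflTransGen A' a y → y ≠ s := by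
        intro a haS haS' y hay hys
        apply haS'
        exact (hmemS' a).mpr ⟨haS, Or.inr (hsD.trans (rtg_flip hA'sym (hys ▸ hay)))⟩
      have toE : ∀ a, a ∈ S → a ≠ s →
          Relation.ReflTransGen (fun u v => A u v ∧ u ≠ s ∧ v ≠ s) a e := by
        intro a haS has
        by_cases haS' : a ∈ S'
        · exact Relation.ReflTransGen.mono (p := fun u v => A u v ∧ u ≠ s ∧ v ≠ s) (by intro u v h; exact ⟨h.1.1, h.2⟩) a e (hsnc a haS' e heS' has (Ne.symm hse))
        · have hane : a ≠ e := fun h => haS' (h ▸ heS')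
          rcases rtg_firsthit e (hconn a haS e heS) hane with ⟨-, hne⟩ | ⟨x', hax', hx'e⟩
          · exact absurd rfl hne
          · have hQ : ∀ u v, (u ≠ s ∧ Relation.ReflTransGen A' a u) → A' u v →
                (v ≠ s ∧ Relation.ReflTransGen A' a v) := by
              intro u v hu huv
              have hv : Relation.ReflTransGen A' a v := hu.2.tail huv
              exact ⟨hnotD a haS haS' v hv, hv⟩
            have hch := rtg_lift hQ ⟨has, Relation.ReflTransGen.refl⟩ hax'
            have hx's : x' ≠ s := hnotD a haS haS' x' hax'
            exact (Relation.ReflTransGen.mono (p := fun u v => A u v ∧ u ≠ s ∧ v ≠ s) (by intro u v h; exact ⟨h.1.1, h.2.1.1, h.2.2.1⟩) a x' hch).tail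
              ⟨hx'e, hx's, Ne.symm hse⟩
      refine ⟨s, hsS, hst, ?_, ?_⟩
      · rcases hsext with h | h
        · exact Or.inl (fun b hb => h b (hnbr b hb))
        · exact Or.inr (fun b hb => h b (hnbr b hb))
      · intro a haS b hbS has hbs
        exact (toE a haS has).trans
          (rtg_flip (fun u v h => ⟨hsym _ _ h.1, h.2.2, h.2.1⟩) (toE b hbS hbs))

private lemma layer_mem {R : Set (Cell 3)} {x p : Cell 3} (hx : x ∈ R)
    (hp : p ∈ layerComp R x) :
    p ∈ R ∧ p 2 = x 2 ∧
      Relation.ReflTransGen (fun u v => v ∈ R ∧ v 2 = x 2 ∧ adj u v) p x := by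
  simp only [layerComp, Set.mem_setOf_eq] at hp
  induction hp with
  | refl => exact ⟨hx, rfl, Relation.ReflTransGen.refl⟩
  | tail _ hstep ih =>
      exact ⟨hstep.1, hstep.2.1,
        Relation.ReflTransGen.head ⟨ih.1, ih.2.1, adjSymm hstep.2.2⟩ ih.2.2⟩

private lemma layerComp_eq {R : Set (Cell 3)} {x q : Cell 3} (hx : x ∈ R)
    (hq : q ∈ layerComp R x) : layerComp R x = layerComp R q := by
  obtain ⟨hqR, hqz, hqx⟩ := layer_mem hx hq
  have hq' : Relation.ReflTransGen (fun u v => v ∈ R ∧ v 2 = x 2 ∧ adj u v) x q := hq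
  have hrel : (fun u v : Cell 3 => v ∈ R ∧ v 2 = q 2 ∧ adj u v) =
      (fun u v : Cell 3 => v ∈ R ∧ v 2 = x 2 ∧ adj u v) := by
    funext u v; rw [hqz]
  ext p
  simp only [layerComp, Set.mem_setOf_eq, hrel]
  constructor
  · intro hp; exact hqx.trans hp
  · intro hp; exact hq'.trans hp

private lemma slice_facts {R s : Set (Cell 3)} (h : IsSlice R s) :
    s ⊆ R ∧ s.Nonempty ∧ ∃ zv : ℤ, ∀ p ∈ s, p 2 = zv := by
  obtain ⟨⟨x, hxR, rfl⟩, -⟩ := h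
  exact ⟨fun p hp => (layer_mem hxR hp).1,
    ⟨x, Relation.ReflTransGen.refl⟩, x 2, fun p hp => (layer_mem hxR hp).2.1⟩

open Classical in
private noncomputable def zf (s : Set (Cell 3)) : ℤ :=
  if h : ∃ zv : ℤ, ∀ p ∈ s, p 2 = zv then h.choose else 0

private lemma zf_spec {R s : Set (Cell 3)} (hs : IsSlice R s) : ∀ p ∈ s, p 2 = zf s := by
  obtain ⟨-, -, hex⟩ := slice_facts hs
  intro p hp
  simp only [zf, dif_pos hex]
  exact hex.choose_spec p hp

private lemma sliceAdj_symm' {R : Set (Cell 3)} {s₁ s₂ : Set (Cell 3)}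
    (h : sliceAdj R s₁ s₂) : sliceAdj R s₂ s₁ := by
  obtain ⟨h1, h2, hne, p, hp, q, hq, hpq⟩ := h
  exact ⟨h2, h1, hne.symm, q, hq, p, hp, adjSymm hpq⟩

private lemma sliceAdj_zf_ne {R : Set (Cell 3)} {s₁ s₂ : Set (Cell 3)}
    (h : sliceAdj R s₁ s₂) : zf s₁ ≠ zf s₂ := by
  obtain ⟨h1, h2, hne, p, hp, q, hq, hpq⟩ := h
  intro heq
  apply hne
  obtain ⟨x₁, hx₁R, hs₁⟩ := h1.1
  obtain ⟨x₂, hx₂R, hs₂⟩ := h2.1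
  have hqR : q ∈ R := (slice_facts h2).1 hq
  have hx₁s : x₁ ∈ s₁ := by
    rw [hs₁]; exact Relation.ReflTransGen.refl
  have hqz : q 2 = x₁ 2 := by
    have e1 := zf_spec h2 q hq
    have e2 := zf_spec h1 x₁ hx₁s
    omega
  have hq1 : q ∈ layerComp R x₁ := by
    have hp' : Relation.ReflTransGen (fun u v => v ∈ R ∧ v 2 = x₁ 2 ∧ adj u v) x₁ p := by
      rw [hs₁] at hp; exact hp
    exact Relation.ReflTransGen.tail hp' ⟨hqR, hqz, hpq⟩
  have hq2 : q ∈ layerComp R x₂ := by rw [hs₂] at hq; exact hq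
  rw [hs₁, hs₂, layerComp_eq hx₁R hq1, layerComp_eq hx₂R hq2]

end Aux

/-- existence of a removable locally extremal slice (Lemma slice-connectivity). -/
theorem exists_removable_extremal_slice (R : Set (Cell 3)) (hfin : R.Finite)
    (hconn : ConnectedConf R)
    (hHconn : ∀ s₁ s₂, IsSlice R s₁ → IsSlice R s₂ →
      Relation.ReflTransGen (sliceAdj R) s₁ s₂)
    (hmany : ∃ s₁ s₂ : Set (Cell 3), IsSlice R s₁ ∧ IsSlice R s₂ ∧ s₁ ≠ s₂)
    (s₀ : Set (Cell 3)) (hs₀ : IsSlice R s₀)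
    (htop : ∃ m ∈ s₀, ∀ p ∈ R, p 2 ≤ m 2) :
    ∃ s : Set (Cell 3), IsSlice R s ∧ s ≠ s₀ ∧ LocallyExtremal R s ∧
      ∀ s₁ s₂, IsSlice R s₁ → IsSlice R s₂ → s₁ ≠ s → s₂ ≠ s →
        Relation.ReflTransGen (fun u v => sliceAdj R u v ∧ u ≠ s ∧ v ≠ s) s₁ s₂ := by
  classical
  have hSfin : {s : Set (Cell 3) | IsSlice R s}.Finite :=
    Set.Finite.subset hfin.finite_subsets (fun s hs => (slice_facts hs).1)
  set S : Finset (Set (Cell 3)) := hSfin.toFinset with hSdef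
  have hmem : ∀ s, s ∈ S ↔ IsSlice R s := fun s => hSfin.mem_toFinset
  have hAS : ∀ a b, sliceAdj R a b → a ∈ S ∧ b ∈ S :=
    fun a b h => ⟨(hmem a).mpr h.1, (hmem b).mpr h.2.1⟩
  have hsym : ∀ a b, sliceAdj R a b → sliceAdj R b a := fun a b => sliceAdj_symm'
  have hzA : ∀ a b, sliceAdj R a b → zf a ≠ zf b := fun a b => sliceAdj_zf_ne
  have hconnS : ∀ a ∈ S, ∀ b ∈ S, Relation.ReflTransGen (sliceAdj R) a b :=
    fun a ha b hb => hHconn a b ((hmem a).mp ha) ((hmem b).mp hb)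
  have hts : s₀ ∈ S := (hmem s₀).mpr hs₀
  have hcard : 1 < S.card := by
    obtain ⟨s₁, s₂, h1, h2, hne⟩ := hmany
    exact Finset.one_lt_card.mpr ⟨s₁, (hmem s₁).mpr h1, s₂, (hmem s₂).mpr h2, hne⟩
  obtain ⟨s, hsS, hss₀, hext, hnc⟩ :=
    key zf S.card S (sliceAdj R) le_rfl hAS hsym hzA hconnS s₀ hts hcard
  have hsSl : IsSlice R s := (hmem s).mp hsS
  refine ⟨s, hsSl, hss₀, ?_, ?_⟩
  · rcases hext with h | h
    · refine Or.inl ⟨hsSl, fun s' hadj p hp q hq => ?_⟩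
      have h1 := zf_spec hadj.2.1 p hp
      have h2 := zf_spec hsSl q hq
      have h3 := h s' hadj
      omega
    · refine Or.inr ⟨hsSl, fun s' hadj p hp q hq => ?_⟩
      have h1 := zf_spec hadj.2.1 p hp
      have h2 := zf_spec hsSl q hq
      have h3 := h s' hadj
      omega
  · intro s₁ s₂ h1 h2 hn1 hn2
    exact hnc s₁ ((hmem s₁).mpr h1) s₂ ((hmem s₂).mpr h2) hn1 hn2


end SlidingCubes
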